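/- arXiv:1904.10532 — 4 statements merged into one kernel-verified Lean document; each statement's English description precedes it below -/
import Mathlib

section
/- Let a = c₁ + c₂j and b = u₁ + u₂j be non-real split quaternions (c₁, c₂, u₁, u₂ ∈ ℂ) with a₀ ≠ b₀ and (a₀ − b₀)⁴ − 2(a₀ − b₀)²(K(a) + K(b)) + (K(a) − K(b))² = 0 (i.e. det(R(a) − L(b)) = 0). Then I_b − I_a + 2(a₀ − b₀)c̄₁ ≠ 0, and setting g = 1 − (2(a₀ − b₀)c₂ / (I_b − I_a + 2(a₀ − b₀)c̄₁)) j, a split quaternion x satisfies x a = b x if and only if there exists y ∈ ℍₛ with x = y g a − b̄ y g. -/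
open Quaternion

/-- The split quaternions: `ℍ[ℝ, -1, 1]`. -/
abbrev SplitQuaternion : Type := ℍ[ℝ, -1, 1]

/-- The imaginary unit `j` of the split quaternions. -/
def qj : SplitQuaternion := ⟨0, 0, 1, 0⟩

/-- The embedding `ℂ = ℝ + ℝi ⊂ ℍₛ`. -/
def toQ (z : ℂ) : SplitQuaternion := ⟨z.re, z.im, 0, 0⟩

/-- `I_q = q * q̄ = q₀² + q₁² − q₂² − q₃²`, as a real scalar. -/
def Iq (q : SplitQuaternion) : ℝ := q.re ^ 2 + q.imI ^ 2 - q.imJ ^ 2 - q.imK ^ 2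

/-- `K(q) = −q₁² + q₂² + q₃²`. -/
def Kq (q : SplitQuaternion) : ℝ := -q.imI ^ 2 + q.imJ ^ 2 + q.imK ^ 2

lemma pair_re (z w : ℂ) : (toQ z + toQ w * qj).re = z.re := by
  simp [toQ, qj, QuaternionAlgebra.re_mul]
lemma pair_imI (z w : ℂ) : (toQ z + toQ w * qj).imI = z.im := by
  simp [toQ, qj, QuaternionAlgebra.imI_mul]
lemma pair_imJ (z w : ℂ) : (toQ z + toQ w * qj).imJ = w.re := by
  simp [toQ, qj, QuaternionAlgebra.imJ_mul]
lemma pair_imK (z w : ℂ) : (toQ z + toQ w * qj).imK = w.im := by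
  simp [toQ, qj, QuaternionAlgebra.imK_mul]

lemma pair_inj {z₁ z₂ w₁ w₂ : ℂ} (h : toQ z₁ + toQ z₂ * qj = toQ w₁ + toQ w₂ * qj) :
    z₁ = w₁ ∧ z₂ = w₂ := by
  constructor <;> apply Complex.ext
  · have h2 := congrArg QuaternionAlgebra.re h; rwa [pair_re, pair_re] at h2
  · have h2 := congrArg QuaternionAlgebra.imI h; rwa [pair_imI, pair_imI] at h2
  · have h2 := congrArg QuaternionAlgebra.imJ h; rwa [pair_imJ, pair_imJ] at h2
  · have h2 := congrArg QuaternionAlgebra.imK h; rwa [pair_imK, pair_imK] at h2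

lemma pair_decomp (x : SplitQuaternion) :
    x = toQ ⟨x.re, x.imI⟩ + toQ ⟨x.imJ, x.imK⟩ * qj := by
  apply QuaternionAlgebra.ext <;> simp [toQ, qj, QuaternionAlgebra.re_mul, QuaternionAlgebra.imI_mul,
      QuaternionAlgebra.imJ_mul, QuaternionAlgebra.imK_mul]

lemma mul_pair (z₁ z₂ w₁ w₂ : ℂ) :
    (toQ z₁ + toQ z₂ * qj) * (toQ w₁ + toQ w₂ * qj)
      = toQ (z₁*w₁ + z₂ * (starRingEnd ℂ) w₂) + toQ (z₁*w₂ + z₂ * (starRingEnd ℂ) w₁) * qj := by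
  apply QuaternionAlgebra.ext <;>
    simp [toQ, qj, QuaternionAlgebra.re_mul, QuaternionAlgebra.imI_mul,
      QuaternionAlgebra.imJ_mul, QuaternionAlgebra.imK_mul, Complex.add_re, Complex.add_im,
      Complex.mul_re, Complex.mul_im] <;> ring

lemma star_pair (z w : ℂ) :
    star (toQ z + toQ w * qj) = toQ ((starRingEnd ℂ) z) + toQ (-w) * qj := by
  apply QuaternionAlgebra.ext <;>
    simp [toQ, qj, QuaternionAlgebra.re_mul, QuaternionAlgebra.imI_mul,
      QuaternionAlgebra.imJ_mul, QuaternionAlgebra.imK_mul]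

lemma sub_pair (z₁ z₂ w₁ w₂ : ℂ) :
    (toQ z₁ + toQ z₂ * qj) - (toQ w₁ + toQ w₂ * qj)
      = toQ (z₁ - w₁) + toQ (z₂ - w₂) * qj := by
  apply QuaternionAlgebra.ext <;>
    simp [toQ, qj, QuaternionAlgebra.re_mul, QuaternionAlgebra.imI_mul,
      QuaternionAlgebra.imJ_mul, QuaternionAlgebra.imK_mul]

lemma toQ_zero : toQ 0 = 0 := by
  apply QuaternionAlgebra.ext <;> simp [toQ]

lemma charpoly (q : SplitQuaternion) : q * q = (2*q.re) • q - (Iq q) • 1 := by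
  apply QuaternionAlgebra.ext <;>
    simp [Iq, QuaternionAlgebra.re_mul, QuaternionAlgebra.imI_mul,
      QuaternionAlgebra.imJ_mul, QuaternionAlgebra.imK_mul] <;> ring

lemma sylv (a b w : SplitQuaternion) :
    (w*a - star b*w)*a - b*(w*a - star b*w)
      = w * ((2*(a.re-b.re)) • a + (Iq b - Iq a) • (1:SplitQuaternion)) := by
  apply QuaternionAlgebra.ext <;>
    simp [Iq, QuaternionAlgebra.re_mul, QuaternionAlgebra.imI_mul,
      QuaternionAlgebra.imJ_mul, QuaternionAlgebra.imK_mul] <;> ring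


set_option maxHeartbeats 1000000 in
/-- For non-real `a = c₁ + c₂j`, `b = u₁ + u₂j` with `a₀ ≠ b₀` and
`det(R(a) − L(b)) = (a₀−b₀)⁴ − 2(a₀−b₀)²(K(a)+K(b)) + (K(a)−K(b))² = 0`, the complex
number `I_b − I_a + 2(a₀−b₀)c̄₁` is nonzero, and with
`g = 1 − (2(a₀−b₀)c₂/(I_b − I_a + 2(a₀−b₀)c̄₁))j`, the solutions of `x a = b x` are
exactly `x = y g a − b̄ y g`, `y ∈ ℍₛ`. -/
theorem xa_eq_bx_solutions_distinct_re (c₁ c₂ u₁ u₂ : ℂ) (a b : SplitQuaternion)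
    (ha : a = toQ c₁ + toQ c₂ * qj) (hb : b = toQ u₁ + toQ u₂ * qj)
    (hima : a.im ≠ 0) (himb : b.im ≠ 0) (hre : a.re ≠ b.re)
    (hdet : (a.re - b.re) ^ 4 - 2 * (a.re - b.re) ^ 2 * (Kq a + Kq b) +
      (Kq a - Kq b) ^ 2 = 0) :
    ((Iq b - Iq a : ℝ) : ℂ) + 2 * ((a.re - b.re : ℝ) : ℂ) * starRingEnd ℂ c₁ ≠ 0 ∧
      ∀ g : SplitQuaternion,
        g = 1 - toQ (2 * ((a.re - b.re : ℝ) : ℂ) * c₂ /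
          (((Iq b - Iq a : ℝ) : ℂ) + 2 * ((a.re - b.re : ℝ) : ℂ) * starRingEnd ℂ c₁)) * qj →
        ∀ x : SplitQuaternion,
          x * a = b * x ↔ ∃ y : SplitQuaternion, x = y * g * a - star b * y * g := by
  have haR : a.re = c₁.re := by rw [ha]; exact pair_re _ _
  have haI : a.imI = c₁.im := by rw [ha]; exact pair_imI _ _
  have haJ : a.imJ = c₂.re := by rw [ha]; exact pair_imJ _ _
  have haK : a.imK = c₂.im := by rw [ha]; exact pair_imK _ _
  have hbR : b.re = u₁.re := by rw [hb]; exact pair_re _ _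
  have hbI : b.imI = u₁.im := by rw [hb]; exact pair_imI _ _
  have hbJ : b.imJ = u₂.re := by rw [hb]; exact pair_imJ _ _
  have hbK : b.imK = u₂.im := by rw [hb]; exact pair_imK _ _
  have hdR0 : a.re - b.re ≠ 0 := sub_ne_zero.mpr hre
  have hdet' : (c₁.re - u₁.re)^4
      - 2*(c₁.re - u₁.re)^2*((-c₁.im^2+c₂.re^2+c₂.im^2) + (-u₁.im^2+u₂.re^2+u₂.im^2))
      + ((-c₁.im^2+c₂.re^2+c₂.im^2) - (-u₁.im^2+u₂.re^2+u₂.im^2))^2 = 0 := by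
    have h := hdet
    simp only [Kq, haR, haI, haJ, haK, hbR, hbI, hbJ, hbK] at h
    linear_combination h
  set dC : ℂ := ((a.re - b.re : ℝ) : ℂ) with hdCdef
  set KC : ℂ := ((Iq b - Iq a : ℝ) : ℂ) with hKCdef
  set D : ℂ := KC + 2 * dC * starRingEnd ℂ c₁ with hDdef
  have hdC0 : dC ≠ 0 := by
    rw [hdCdef]; exact_mod_cast hdR0
  have hcd : (starRingEnd ℂ) dC = dC := by rw [hdCdef]; exact Complex.conj_ofReal _
  have hcK : (starRingEnd ℂ) KC = KC := by rw [hKCdef]; exact Complex.conj_ofReal _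
  have hdCre : dC.re = c₁.re - u₁.re := by rw [hdCdef, Complex.ofReal_re, haR, hbR]
  have hdCim : dC.im = 0 := by rw [hdCdef]; exact Complex.ofReal_im _
  have hKCre : KC.re = (u₁.re^2+u₁.im^2-u₂.re^2-u₂.im^2) - (c₁.re^2+c₁.im^2-c₂.re^2-c₂.im^2) := by
    rw [hKCdef, Complex.ofReal_re]; simp only [Iq, haR, haI, haJ, haK, hbR, hbI, hbJ, hbK]
  have hKCim : KC.im = 0 := by rw [hKCdef]; exact Complex.ofReal_im _
  have hDre : D.re = KC.re + 2*dC.re*c₁.re := by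
    rw [hDdef]; simp [Complex.add_re, Complex.mul_re, Complex.conj_re, Complex.conj_im, hdCim]
  have hDim : D.im = -(2*dC.re*c₁.im) := by
    rw [hDdef]; simp [Complex.add_im, Complex.mul_im, Complex.conj_re, Complex.conj_im, hdCim, hKCim]
  -- the main real consequence of hdet
  have hMR : (D.re)^2 + (D.im)^2 = 4*dC.re^2*(c₂.re^2+c₂.im^2) := by
    rw [hDre, hDim, hKCre, hdCre]; linear_combination hdet'
  have hD0 : D ≠ 0 := by
    intro h0
    have h1 : D.re = 0 := by rw [h0]; rfl
    have h2 : D.im = 0 := by rw [h0]; rfl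
    rw [h1, h2, hdCre] at hMR
    have hds : (c₁.re-u₁.re) ≠ 0 := by
      intro h; rw [haR, hbR] at hdR0; exact hdR0 h
    have h3 : c₂.re^2 + c₂.im^2 = 0 := by
      have h4 : (c₁.re-u₁.re)^2*(c₂.re^2+c₂.im^2) = 0 := by linarith
      rcases mul_eq_zero.mp h4 with h | h
      · exact absurd (pow_eq_zero_iff (two_ne_zero) |>.mp h) hds
      · exact h
    have hr2 : c₂.re = 0 :=
      pow_eq_zero_iff two_ne_zero |>.mp (le_antisymm (by linarith [sq_nonneg c₂.im]) (sq_nonneg _))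
    have hs2 : c₂.im = 0 :=
      pow_eq_zero_iff two_ne_zero |>.mp (le_antisymm (by linarith [sq_nonneg c₂.re]) (sq_nonneg _))
    have hq2 : c₁.im = 0 := by
      rw [hDim, hdCre] at h2
      have h5 : (2*(c₁.re-u₁.re))*c₁.im = 0 := by linarith [neg_eq_zero.mp h2]
      rcases mul_eq_zero.mp h5 with h | h
      · exact absurd (by linarith : c₁.re - u₁.re = 0) hds
      · exact h
    apply hima
    apply QuaternionAlgebra.ext <;>
      simp [QuaternionAlgebra.re_im, QuaternionAlgebra.imI_im, QuaternionAlgebra.imJ_im,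
        QuaternionAlgebra.imK_im, haI, haJ, haK, hq2, hr2, hs2]
  refine ⟨hD0, ?_⟩
  clear_value dC KC D
  intro g hg x
  set t : ℂ := 2 * dC * c₂ / D with htdef
  clear_value t
  have hD0c : (starRingEnd ℂ) D ≠ 0 := fun h => hD0 (by simpa using congrArg (starRingEnd ℂ) h)
  have hcD : (starRingEnd ℂ) D = KC + 2*dC*c₁ := by
    rw [hDdef]; simp [map_add, map_mul, map_ofNat, hcd, hcK]
  have hcDc : (starRingEnd ℂ) (KC + 2*dC*c₁) = D := by
    rw [hDdef]; simp [map_add, map_mul, map_ofNat, hcd, hcK]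
  have hKCre0 : KC.re = Iq b - Iq a := by rw [hKCdef]; exact Complex.ofReal_re _
  have hdCre0 : dC.re = a.re - b.re := by rw [hdCdef]; exact Complex.ofReal_re _
  have hQaR : (KC.re)^2 + 4*dC.re*c₁.re*KC.re + 4*dC.re^2*(c₁.re^2+c₁.im^2-c₂.re^2-c₂.im^2) = 0 := by
    rw [hKCre, hdCre]; linear_combination hdet'
  have hQbR : (KC.re)^2 + 4*dC.re*u₁.re*KC.re + 4*dC.re^2*(u₁.re^2+u₁.im^2-u₂.re^2-u₂.im^2) = 0 := by
    rw [hKCre, hdCre]; linear_combination hdet'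
  have hQa : KC*KC + 2*dC*(c₁+(starRingEnd ℂ) c₁)*KC
      + (2*dC)*(2*dC)*(c₁*(starRingEnd ℂ) c₁ - c₂*(starRingEnd ℂ) c₂) = 0 := by
    apply Complex.ext <;>
      simp only [Complex.add_re, Complex.add_im, Complex.sub_re, Complex.sub_im, Complex.mul_re,
        Complex.mul_im, Complex.conj_re, Complex.conj_im, Complex.zero_re, Complex.zero_im,
        Complex.re_ofNat, Complex.im_ofNat, hdCim, hKCim]
    · linear_combination hQaR
    · ring
  have hQb : KC*KC + 2*dC*(u₁+(starRingEnd ℂ) u₁)*KC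
      + (2*dC)*(2*dC)*(u₁*(starRingEnd ℂ) u₁ - u₂*(starRingEnd ℂ) u₂) = 0 := by
    apply Complex.ext <;>
      simp only [Complex.add_re, Complex.add_im, Complex.sub_re, Complex.sub_im, Complex.mul_re,
        Complex.mul_im, Complex.conj_re, Complex.conj_im, Complex.zero_re, Complex.zero_im,
        Complex.re_ofNat, Complex.im_ofNat, hdCim, hKCim]
    · linear_combination hQbR
    · ring
  have hM : D * (starRingEnd ℂ) D = (2*dC*c₂) * (2*dC*(starRingEnd ℂ) c₂) := by
    apply Complex.ext <;>
      simp only [Complex.add_re, Complex.add_im, Complex.mul_re, Complex.mul_im,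
        Complex.conj_re, Complex.conj_im, Complex.re_ofNat, Complex.im_ofNat, hdCim]
    · linear_combination hMR
    · ring
  have hgpair : g = toQ 1 + toQ (-t) * qj := by
    rw [hg]; apply QuaternionAlgebra.ext <;>
      simp only [toQ, qj, QuaternionAlgebra.re_mul, QuaternionAlgebra.imI_mul,
        QuaternionAlgebra.imJ_mul, QuaternionAlgebra.imK_mul, QuaternionAlgebra.re_sub,
        QuaternionAlgebra.imI_sub, QuaternionAlgebra.imJ_sub, QuaternionAlgebra.imK_sub,
        QuaternionAlgebra.re_add, QuaternionAlgebra.imI_add, QuaternionAlgebra.imJ_add,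
        QuaternionAlgebra.imK_add, QuaternionAlgebra.re_one, QuaternionAlgebra.imI_one,
        QuaternionAlgebra.imJ_one, QuaternionAlgebra.imK_one, Complex.neg_re, Complex.neg_im,
        Complex.one_re, Complex.one_im] <;> ring
  have hqpair : (2*(a.re-b.re)) • a + (Iq b - Iq a) • (1:SplitQuaternion)
      = toQ (KC + 2*dC*c₁) + toQ (2*dC*c₂) * qj := by
    apply QuaternionAlgebra.ext <;>
      simp only [toQ, qj, QuaternionAlgebra.re_mul, QuaternionAlgebra.imI_mul,
        QuaternionAlgebra.imJ_mul, QuaternionAlgebra.imK_mul, QuaternionAlgebra.re_add,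
        QuaternionAlgebra.imI_add, QuaternionAlgebra.imJ_add, QuaternionAlgebra.imK_add,
        QuaternionAlgebra.re_smul, QuaternionAlgebra.imI_smul, QuaternionAlgebra.imJ_smul,
        QuaternionAlgebra.imK_smul, QuaternionAlgebra.re_one, QuaternionAlgebra.imI_one,
        QuaternionAlgebra.imJ_one, QuaternionAlgebra.imK_one, smul_eq_mul,
        Complex.add_re, Complex.add_im, Complex.mul_re, Complex.mul_im,
        Complex.re_ofNat, Complex.im_ofNat, hKCre0, hKCim, hdCre0, hdCim,
        haR, haI, haJ, haK] <;> ring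
  have htD : t * D = 2*dC*c₂ := by rw [htdef]; field_simp
  have hconjt : (starRingEnd ℂ) t = 2*dC*(starRingEnd ℂ) c₂ / ((starRingEnd ℂ) D) := by
    rw [htdef]; simp [map_div₀, map_mul, map_ofNat, hcd]
  have hti : t * (starRingEnd ℂ) t = 1 := by
    rw [hconjt, htdef, div_mul_div_comm, div_eq_one_iff_eq (mul_ne_zero hD0 hD0c)]
    linear_combination -hM
  have hgq : g * (toQ (KC + 2*dC*c₁) + toQ (2*dC*c₂) * qj) = 0 := by
    rw [hgpair, mul_pair]
    have k1 : (1:ℂ)*(KC+2*dC*c₁) + (-t)*(starRingEnd ℂ) (2*dC*c₂) = 0 := by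
      have e : (starRingEnd ℂ) (2*dC*c₂) = 2*dC*(starRingEnd ℂ) c₂ := by simp [map_mul, map_ofNat, hcd]
      rw [e, one_mul, htdef]
      field_simp
      linear_combination hM - D*hcD
    have k2 : (1:ℂ)*(2*dC*c₂) + (-t)*(starRingEnd ℂ) (KC + 2*dC*c₁) = 0 := by
      rw [hcDc, one_mul]; linear_combination -htD
    rw [k1, k2, toQ_zero]; simp
  constructor
  · intro hx
    obtain ⟨v₁, v₂, hxd⟩ : ∃ v₁ v₂, x = toQ v₁ + toQ v₂ * qj := ⟨_, _, pair_decomp x⟩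
    have hF := hx
    rw [hxd, ha, hb, mul_pair, mul_pair] at hF
    obtain ⟨hF1, hF2⟩ := pair_inj hF
    have hqe : (2*(a.re-b.re)) • a + (Iq b - Iq a) • (1:SplitQuaternion)
        = a*a - (2*b.re)•a + (Iq b)•(1:SplitQuaternion) := by
      rw [charpoly a]; module
    have hchb : b*b - (2*b.re)•b + (Iq b)•(1:SplitQuaternion) = 0 := by
      rw [charpoly b]; module
    have hxq : x * ((2*(a.re-b.re)) • a + (Iq b - Iq a) • (1:SplitQuaternion)) = 0 := by
      rw [hqe]
      have e1 : x*(a*a) = b*(b*x) := by rw [← mul_assoc, hx, mul_assoc, hx]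
      calc x * (a*a - (2*b.re)•a + (Iq b)•(1:SplitQuaternion))
          = x*(a*a) - (2*b.re)•(x*a) + (Iq b)•x := by
            rw [mul_add, mul_sub, mul_smul_comm, mul_smul_comm, mul_one]
        _ = b*(b*x) - (2*b.re)•(b*x) + (Iq b)•x := by rw [e1, hx]
        _ = (b*b - (2*b.re)•b + (Iq b)•(1:SplitQuaternion))*x := by
            rw [add_mul, sub_mul, smul_mul_assoc, smul_mul_assoc, one_mul, mul_assoc]
        _ = 0 := by rw [hchb, zero_mul]
    rw [hqpair, hxd, mul_pair] at hxq
    have hzq : (0:SplitQuaternion) = toQ 0 + toQ 0 * qj := by rw [toQ_zero]; simp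
    rw [hzq] at hxq
    obtain ⟨hC1, hC2⟩ := pair_inj hxq
    rw [hcDc] at hC2
    have hv2 : v₂ = -(t*v₁) := by
      rw [htdef]; field_simp; linear_combination hC2
    have hv2c : (starRingEnd ℂ) v₂ = -((starRingEnd ℂ) t * (starRingEnd ℂ) v₁) := by
      have h := congrArg (starRingEnd ℂ) hv2; simpa [map_mul] using h
    have hE1 : v₁*(c₁ - t*(starRingEnd ℂ) c₂ - u₁)
        + u₂*((starRingEnd ℂ) t)*((starRingEnd ℂ) v₁) = 0 := by
      linear_combination hF1 - (starRingEnd ℂ) c₂ * hv2 + u₂ * hv2c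
    have hw : 2*dC*(c₁ - t*(starRingEnd ℂ) c₂) = -KC := by
      rw [htdef]; field_simp; linear_combination (2*dC*c₁ + KC)*hDdef + hQa
    have hwc : 2*dC*((starRingEnd ℂ) c₁ - (starRingEnd ℂ) t*c₂) = -KC := by
      have h := congrArg (starRingEnd ℂ) hw
      simpa [map_mul, map_sub, map_neg, map_ofNat, hcd, hcK] using h
    have hreal : c₁ - t*(starRingEnd ℂ) c₂ = (starRingEnd ℂ) c₁ - (starRingEnd ℂ) t*c₂ :=
      mul_left_cancel₀ (mul_ne_zero two_ne_zero hdC0) (hw.trans hwc.symm)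
    obtain ⟨α, hαdef⟩ : ∃ α:ℂ, α = c₁ - t*(starRingEnd ℂ) c₂ - (starRingEnd ℂ) u₁ := ⟨_, rfl⟩
    have hαc : (starRingEnd ℂ) α = c₁ - t*(starRingEnd ℂ) c₂ - u₁ := by
      rw [hαdef]
      simp only [map_sub, map_mul, Complex.conj_conj]
      rw [← hreal]
    have h2dC : (2:ℂ)*dC*(2*dC) ≠ 0 := by
      apply mul_ne_zero <;> exact mul_ne_zero two_ne_zero hdC0
    have hI2 : α * (starRingEnd ℂ) α = u₂ * (starRingEnd ℂ) u₂ := by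
      rw [hαc, hαdef]
      have e1 : (2*dC)*(c₁ - t*(starRingEnd ℂ) c₂ - (starRingEnd ℂ) u₁)
          = -KC - 2*dC*(starRingEnd ℂ) u₁ := by linear_combination hw
      have e2 : (2*dC)*(c₁ - t*(starRingEnd ℂ) c₂ - u₁) = -KC - 2*dC*u₁ := by
        linear_combination hw
      have e3 : (-KC - 2*dC*(starRingEnd ℂ) u₁)*(-KC - 2*dC*u₁)
          = (2*dC)*(2*dC)*(u₂*(starRingEnd ℂ) u₂) := by linear_combination hQb
      apply mul_left_cancel₀ h2dC
      linear_combination ((2*dC)*(c₁ - t*(starRingEnd ℂ) c₂ - u₁))*e1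
        + (-KC - 2*dC*(starRingEnd ℂ) u₁)*e2 + e3
    have hα0 : α ≠ 0 := by
      intro h0
      have h1 : u₂ * (starRingEnd ℂ) u₂ = 0 := by rw [← hI2, h0, map_zero, mul_zero]
      have hu2 : u₂ = 0 := by
        have h2 : Complex.normSq u₂ = 0 := by
          have h3 := h1; rw [Complex.mul_conj] at h3; exact_mod_cast h3
        exact Complex.normSq_eq_zero.mp h2
      have hu1 : u₁.im = 0 := by
        have h5 := hαc; rw [h0, map_zero] at h5
        have h6 := hαdef; rw [h0] at h6
        have h7 : (starRingEnd ℂ) u₁ = u₁ := by linear_combination h6 - h5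
        exact Complex.conj_eq_iff_im.mp h7
      apply himb
      apply QuaternionAlgebra.ext <;> simp [hbI, hbJ, hbK, hu1, hu2]
    have hα0c : (starRingEnd ℂ) α ≠ 0 := fun h => hα0 (by simpa using congrArg (starRingEnd ℂ) h)
    refine ⟨toQ (v₁/(2*α)), ?_⟩
    obtain ⟨z, hzdef⟩ : ∃ z:ℂ, z = v₁/(2*α) := ⟨_, rfl⟩
    rw [show (toQ (v₁/(2*α))) = toQ z from by rw [hzdef]]
    have hzc : (starRingEnd ℂ) z = (starRingEnd ℂ) v₁/(2*(starRingEnd ℂ) α) := by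
      rw [hzdef]; simp [map_div₀, map_mul, map_ofNat]
    have hz1 : 2*(z*α) = v₁ := by rw [hzdef]; field_simp
    have hz2 : 2*(u₂*(starRingEnd ℂ) t*(starRingEnd ℂ) z) = -v₁ := by
      rw [hzc]; field_simp; linear_combination hE1 + v₁*hαc
    have hyg : toQ z * g = toQ z + toQ (-(z*t)) * qj := by
      calc toQ z * g = (toQ z + toQ 0 * qj) * (toQ 1 + toQ (-t) * qj) := by
            rw [toQ_zero, zero_mul, add_zero, hgpair]
        _ = toQ (z*1 + 0*(starRingEnd ℂ) (-t)) + toQ (z*(-t) + 0*(starRingEnd ℂ) 1) * qj :=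
            mul_pair _ _ _ _
        _ = toQ z + toQ (-(z*t)) * qj := by norm_num
    have e2 : toQ z * g * a
        = toQ (z*c₁ + (-(z*t))*(starRingEnd ℂ) c₂)
          + toQ (z*c₂ + (-(z*t))*(starRingEnd ℂ) c₁) * qj := by
      rw [hyg, ha, mul_pair]
    have e3 : star b * (toQ z * g)
        = toQ ((starRingEnd ℂ) u₁*z + (-u₂)*(starRingEnd ℂ) (-(z*t)))
          + toQ ((starRingEnd ℂ) u₁*(-(z*t)) + (-u₂)*(starRingEnd ℂ) z) * qj := by
      rw [hb, star_pair, hyg, mul_pair]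
    have himp : c₂ - t*(starRingEnd ℂ) c₁ + (starRingEnd ℂ) u₁*t + t*α = 0 := by
      rw [hαdef]; linear_combination t*hreal - c₂*hti
    have hc1 : (z*c₁ + (-(z*t))*(starRingEnd ℂ) c₂)
        - ((starRingEnd ℂ) u₁*z + (-u₂)*(starRingEnd ℂ) (-(z*t))) = v₁ := by
      simp only [map_neg, map_mul]
      rw [hαdef] at hz1
      linear_combination (1/2)*hz1 - (1/2)*hz2
    have hc2 : (z*c₂ + (-(z*t))*(starRingEnd ℂ) c₁)
        - ((starRingEnd ℂ) u₁*(-(z*t)) + (-u₂)*(starRingEnd ℂ) z) = v₂ := by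
      rw [hv2]
      linear_combination z*himp - (t/2)*hz1 + (t/2)*hz2 - u₂*(starRingEnd ℂ) z*hti
    rw [show star b * toQ z * g = star b * (toQ z * g) from mul_assoc _ _ _]
    rw [e2, e3, sub_pair, hc1, hc2]
    exact hxd
  · rintro ⟨y, rfl⟩
    have h0 : (y*g*a - star b*(y*g))*a - b*(y*g*a - star b*(y*g)) = 0 := by
      have hs := sylv a b (y*g)
      rw [hqpair] at hs
      calc (y*g*a - star b*(y*g))*a - b*(y*g*a - star b*(y*g))
          = (y*g) * (toQ (KC + 2*dC*c₁) + toQ (2*dC*c₂) * qj) := hs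
        _ = y * (g * (toQ (KC + 2*dC*c₁) + toQ (2*dC*c₂) * qj)) := mul_assoc _ _ _
        _ = 0 := by rw [hgq, mul_zero]
    rw [show star b * y * g = star b * (y*g) from mul_assoc _ _ _]
    exact sub_eq_zero.mp h0
end

section
/- For every non-real split quaternion a = a₀ + a₁i + a₂j + a₃k ∈ ℍₛ there exists q ∈ ℍₛ with I_q ≠ 0 such that: q a = (a₀ + √(K(a)) · j) q if K(a) > 0; q a = (a₀ + √(−K(a)) · i) q if K(a) < 0; and q a = (a₀ + i + j) q if K(a) = 0. (Equivalently, q a q⁻¹ equals the stated canonical form.) -/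
open Quaternion

/-- The imaginary unit `i` of the split quaternions. -/
def qi : SplitQuaternion := ⟨0, 1, 0, 0⟩

/-- Every non-real split quaternion `a` is similar (via some invertible `q`, i.e. with
`I_q ≠ 0`) to `a₀ + √(K(a))·j` if `K(a) > 0`, to `a₀ + √(−K(a))·i` if `K(a) < 0`, and to
`a₀ + i + j` if `K(a) = 0`. -/
theorem similar_canonical_form (a : SplitQuaternion) (ha : a.im ≠ 0) :
    ∃ q : SplitQuaternion, Iq q ≠ 0 ∧
      (0 < Kq a → q * a = (((a.re : ℝ) : SplitQuaternion) + Real.sqrt (Kq a) • qj) * q) ∧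
      (Kq a < 0 → q * a = (((a.re : ℝ) : SplitQuaternion) + Real.sqrt (-Kq a) • qi) * q) ∧
      (Kq a = 0 → q * a = (((a.re : ℝ) : SplitQuaternion) + qi + qj) * q) := by
  rcases lt_trichotomy (Kq a) 0 with hK | hK | hK
  · -- K < 0, canonical form a₀ + √(-K) i
    set t := Real.sqrt (-Kq a) with htdef
    have ht0 : 0 < t := Real.sqrt_pos.mpr (by linarith)
    have ht : t ^ 2 = a.imI ^ 2 - a.imJ ^ 2 - a.imK ^ 2 := by
      rw [htdef, Real.sq_sqrt (by linarith)]; simp [Kq]; ring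
    by_cases h : a.imI = -t
    · -- degenerate: a.imJ = a.imK = 0
      have h2 : a.imJ = 0 ∧ a.imK = 0 := by
        constructor <;> nlinarith [sq_nonneg a.imJ, sq_nonneg a.imK]
      refine ⟨⟨0, 0, 0, 1⟩, by norm_num [Iq], fun h' => absurd h' (by linarith), fun _ => ?_,
        fun h' => absurd h' (by linarith)⟩
      apply QuaternionAlgebra.ext <;>
        simp [QuaternionAlgebra.re_mul, QuaternionAlgebra.imI_mul, QuaternionAlgebra.imJ_mul,
          QuaternionAlgebra.imK_mul, qi, qj, h2.1, h2.2] <;> linarith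
    · refine ⟨⟨0, a.imI + t, a.imJ, a.imK⟩, ?_, fun h' => absurd h' (by linarith), fun _ => ?_,
        fun h' => absurd h' (by linarith)⟩
      · have : a.imI + t ≠ 0 := fun hc => h (by linarith)
        simp only [Iq]
        have : (0:ℝ)^2 + (a.imI + t)^2 - a.imJ^2 - a.imK^2 = 2*t*(a.imI + t) := by nlinarith
        rw [this]
        positivity
      · apply QuaternionAlgebra.ext <;>
          simp [QuaternionAlgebra.re_mul, QuaternionAlgebra.imI_mul, QuaternionAlgebra.imJ_mul,
            QuaternionAlgebra.imK_mul, qi, qj] <;> ring_nf <;> linarith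
  · -- K = 0, canonical form a₀ + i + j
    have hk : a.imI ^ 2 = a.imJ ^ 2 + a.imK ^ 2 := by simp [Kq] at hK; linarith
    have h1 : a.imI ≠ 0 := by
      intro h0
      have h2 : a.imJ = 0 ∧ a.imK = 0 := by
        constructor <;> nlinarith [sq_nonneg a.imJ, sq_nonneg a.imK]
      exact ha (by ext <;> simp [h0, h2.1, h2.2])
    by_cases h : a.imJ = a.imI
    · refine ⟨⟨-(a.imI + 1), 0, -a.imK, a.imJ - 1⟩, ?_,
        fun h' => absurd h' (by linarith), fun h' => absurd h' (by linarith), fun _ => ?_⟩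
      · simp only [Iq]
        have : (-(a.imI + 1))^2 + (0:ℝ)^2 - (-a.imK)^2 - (a.imJ - 1)^2 = 4 * a.imI := by
          rw [h] at hk ⊢; nlinarith
        rw [this]
        simpa using h1
      · apply QuaternionAlgebra.ext <;>
          simp [QuaternionAlgebra.re_mul, QuaternionAlgebra.imI_mul, QuaternionAlgebra.imJ_mul,
            QuaternionAlgebra.imK_mul, qi, qj] <;> ring_nf <;> linarith
    · refine ⟨⟨0, a.imI + 1, a.imJ + 1, a.imK⟩, ?_,
        fun h' => absurd h' (by linarith), fun h' => absurd h' (by linarith), fun _ => ?_⟩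
      · simp only [Iq]
        have : (0:ℝ)^2 + (a.imI + 1)^2 - (a.imJ + 1)^2 - a.imK^2 = 2*(a.imI - a.imJ) := by
          nlinarith
        rw [this]
        have : a.imI - a.imJ ≠ 0 := fun hc => h (by linarith)
        simpa using this
      · apply QuaternionAlgebra.ext <;>
          simp [QuaternionAlgebra.re_mul, QuaternionAlgebra.imI_mul, QuaternionAlgebra.imJ_mul,
            QuaternionAlgebra.imK_mul, qi, qj] <;> ring_nf <;> linarith
  · -- K > 0, canonical form a₀ + √K j
    set s := Real.sqrt (Kq a) with hsdef
    have hs0 : 0 < s := Real.sqrt_pos.mpr hK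
    have hs : s ^ 2 = -a.imI ^ 2 + a.imJ ^ 2 + a.imK ^ 2 := by
      rw [hsdef, Real.sq_sqrt hK.le]; simp [Kq]
    by_cases h : a.imJ = -s
    · refine ⟨⟨-a.imI, 0, -a.imK, a.imJ - s⟩, ?_, fun _ => ?_,
        fun h' => absurd h' (by linarith), fun h' => absurd h' (by linarith)⟩
      · simp only [Iq]
        have : (-a.imI)^2 + (0:ℝ)^2 - (-a.imK)^2 - (a.imJ - s)^2 = -4 * s^2 := by
          rw [h] at hs ⊢; nlinarith
        rw [this]
        positivity
      · apply QuaternionAlgebra.ext <;>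
          simp [QuaternionAlgebra.re_mul, QuaternionAlgebra.imI_mul, QuaternionAlgebra.imJ_mul,
            QuaternionAlgebra.imK_mul, qi, qj] <;> ring_nf <;> linarith
    · refine ⟨⟨0, a.imI, a.imJ + s, a.imK⟩, ?_, fun _ => ?_,
        fun h' => absurd h' (by linarith), fun h' => absurd h' (by linarith)⟩
      · simp only [Iq]
        have : (0:ℝ)^2 + a.imI^2 - (a.imJ + s)^2 - a.imK^2 = -2*s*(a.imJ + s) := by nlinarith
        rw [this]
        have : a.imJ + s ≠ 0 := fun hc => h (by linarith)
        simp [sub_eq_zero, hs0.ne', this]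
      · apply QuaternionAlgebra.ext <;>
          simp [QuaternionAlgebra.re_mul, QuaternionAlgebra.imI_mul, QuaternionAlgebra.imJ_mul,
            QuaternionAlgebra.imK_mul, qi, qj] <;> ring_nf <;> linarith
end

section
/- Two non-real split quaternions a, b ∈ ℍₛ are similar — i.e. there exists q ∈ ℍₛ with I_q ≠ 0 and q a = b q — if and only if Re(a) = Re(b) and K(a) = K(b). -/
open Quaternion

/-- Key conjugation relation: for any `c`, `q = b.im * c + c * a.im` intertwines `a` and `b`,
provided `Re a = Re b` and `K a = K b`. -/
lemma conj_rel (a b : SplitQuaternion) (hre : a.re = b.re) (hK : Kq a = Kq b)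
    (c : SplitQuaternion) :
    (b.im * c + c * a.im) * a = b * (b.im * c + c * a.im) := by
  unfold Kq at hK
  ext <;>
    simp only [QuaternionAlgebra.re_mul, QuaternionAlgebra.imI_mul, QuaternionAlgebra.imJ_mul,
      QuaternionAlgebra.imK_mul, QuaternionAlgebra.re_add, QuaternionAlgebra.imI_add,
      QuaternionAlgebra.imJ_add, QuaternionAlgebra.imK_add, QuaternionAlgebra.re_im,
      QuaternionAlgebra.imI_im, QuaternionAlgebra.imJ_im, QuaternionAlgebra.imK_im]
  · linear_combination c.re * hK + (-(b.imI * c.imI) + b.imJ * c.imJ + b.imK * c.imK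
      - c.imI * a.imI + c.imJ * a.imJ + c.imK * a.imK) * hre
  · linear_combination c.imI * hK + (b.imI * c.re + c.re * a.imI
      - b.imJ * c.imK + b.imK * c.imJ - c.imJ * a.imK + c.imK * a.imJ) * hre
  · linear_combination c.imJ * hK + (b.imJ * c.re + c.re * a.imJ - b.imI * c.imK + b.imK * c.imI
      - c.imI * a.imK + c.imK * a.imI) * hre
  · linear_combination c.imK * hK + (b.imK * c.re + c.re * a.imK + b.imI * c.imJ - b.imJ * c.imI
      + c.imI * a.imJ - c.imJ * a.imI) * hre

/-- Two non-real split quaternions `a, b` are similar (`q a = b q` for some invertible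
`q`, i.e. with `I_q ≠ 0`) if and only if `Re a = Re b` and `K(a) = K(b)`. -/
theorem similar_iff (a b : SplitQuaternion) (ha : a.im ≠ 0) (hb : b.im ≠ 0) :
    (∃ q : SplitQuaternion, Iq q ≠ 0 ∧ q * a = b * q) ↔ (a.re = b.re ∧ Kq a = Kq b) := by
  constructor
  · rintro ⟨q, hq, h⟩
    unfold Iq at hq
    have h0 := congrArg QuaternionAlgebra.re h
    have h1 := congrArg QuaternionAlgebra.imI h
    have h2 := congrArg QuaternionAlgebra.imJ h
    have h3 := congrArg QuaternionAlgebra.imK h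
    simp only [QuaternionAlgebra.re_mul, QuaternionAlgebra.imI_mul, QuaternionAlgebra.imJ_mul,
      QuaternionAlgebra.imK_mul] at h0 h1 h2 h3
    have h5 : (a.re - b.re) * (q.re ^ 2 + q.imI ^ 2 - q.imJ ^ 2 - q.imK ^ 2) = 0 := by
      linear_combination q.re * h0 + q.imI * h1 - q.imJ * h2 - q.imK * h3
    have hre : a.re = b.re := by
      rcases mul_eq_zero.mp h5 with h' | h'
      · linarith
      · exact absurd h' hq
    refine ⟨hre, ?_⟩
    have h6 : ((a.re ^ 2 + a.imI ^ 2 - a.imJ ^ 2 - a.imK ^ 2)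
        - (b.re ^ 2 + b.imI ^ 2 - b.imJ ^ 2 - b.imK ^ 2))
        * (q.re ^ 2 + q.imI ^ 2 - q.imJ ^ 2 - q.imK ^ 2) = 0 := by
      linear_combination
        ((q.re * a.re - q.imI * a.imI + q.imJ * a.imJ + q.imK * a.imK)
          + (b.re * q.re - b.imI * q.imI + b.imJ * q.imJ + b.imK * q.imK)) * h0
        + ((q.re * a.imI + q.imI * a.re - q.imJ * a.imK + q.imK * a.imJ)
          + (b.re * q.imI + b.imI * q.re - b.imJ * q.imK + b.imK * q.imJ)) * h1
        - ((q.re * a.imJ - q.imI * a.imK + q.imJ * a.re + q.imK * a.imI)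
          + (b.re * q.imJ - b.imI * q.imK + b.imJ * q.re + b.imK * q.imI)) * h2
        - ((q.re * a.imK + q.imI * a.imJ - q.imJ * a.imI + q.imK * a.re)
          + (b.re * q.imK + b.imI * q.imJ - b.imJ * q.imI + b.imK * q.re)) * h3
    have hIq : (a.re ^ 2 + a.imI ^ 2 - a.imJ ^ 2 - a.imK ^ 2)
        = (b.re ^ 2 + b.imI ^ 2 - b.imJ ^ 2 - b.imK ^ 2) := by
      rcases mul_eq_zero.mp h6 with h' | h'
      · linarith
      · exact absurd h' hq
    unfold Kq
    linear_combination (a.re + b.re) * hre - hIq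
  · rintro ⟨hre, hK⟩
    rcases ne_or_eq (Iq (b.im * 1 + 1 * a.im)) 0 with e1 | e1
    · exact ⟨_, e1, conj_rel a b hre hK 1⟩
    rcases ne_or_eq (Iq (b.im * ⟨0, 1, 0, 0⟩ + ⟨0, 1, 0, 0⟩ * a.im)) 0 with e2 | e2
    · exact ⟨_, e2, conj_rel a b hre hK _⟩
    rcases ne_or_eq (Iq (b.im * ⟨0, 0, 1, 0⟩ + ⟨0, 0, 1, 0⟩ * a.im)) 0 with e3 | e3
    · exact ⟨_, e3, conj_rel a b hre hK _⟩
    rcases ne_or_eq (Iq (b.im * ⟨0, 0, 0, 1⟩ + ⟨0, 0, 0, 1⟩ * a.im)) 0 with e4 | e4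
    · exact ⟨_, e4, conj_rel a b hre hK _⟩
    exfalso
    unfold Iq Kq at *
    simp only [QuaternionAlgebra.re_mul, QuaternionAlgebra.imI_mul, QuaternionAlgebra.imJ_mul,
      QuaternionAlgebra.imK_mul, QuaternionAlgebra.re_add, QuaternionAlgebra.imI_add,
      QuaternionAlgebra.imJ_add, QuaternionAlgebra.imK_add, QuaternionAlgebra.re_im,
      QuaternionAlgebra.imI_im, QuaternionAlgebra.imJ_im, QuaternionAlgebra.imK_im,
      QuaternionAlgebra.re_one, QuaternionAlgebra.imI_one, QuaternionAlgebra.imJ_one,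
      QuaternionAlgebra.imK_one] at e1 e2 e3 e4
    have hKa : -a.imI ^ 2 + a.imJ ^ 2 + a.imK ^ 2 = 0 := by
      linear_combination (-e1 - e2 + e3 + e4) / 8 + hK / 2
    have hKb : -b.imI ^ 2 + b.imJ ^ 2 + b.imK ^ 2 = 0 := by
      linear_combination (-e1 - e2 + e3 + e4) / 8 - hK / 2
    have hS1 : a.imI * b.imI = 0 := by
      linear_combination (e1 + e2 + e3 + e4) / 8
    have ha1 : a.imI ≠ 0 := by
      intro h'
      apply ha
      have hJK : a.imJ ^ 2 + a.imK ^ 2 = 0 := by linear_combination hKa + a.imI * h'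
      obtain ⟨h2', h3'⟩ := add_eq_zero_iff_of_nonneg (sq_nonneg a.imJ) (sq_nonneg a.imK) |>.mp hJK
      have h2 : a.imJ = 0 := by
        have := sq_eq_zero_iff.mp h2'; exact this
      have h3 : a.imK = 0 := sq_eq_zero_iff.mp h3'
      ext <;> simp [h', h2, h3]
    have hb1 : b.imI ≠ 0 := by
      intro h'
      apply hb
      have hJK : b.imJ ^ 2 + b.imK ^ 2 = 0 := by linear_combination hKb + b.imI * h'
      obtain ⟨h2', h3'⟩ := add_eq_zero_iff_of_nonneg (sq_nonneg b.imJ) (sq_nonneg b.imK) |>.mp hJK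
      have h2 : b.imJ = 0 := sq_eq_zero_iff.mp h2'
      have h3 : b.imK = 0 := sq_eq_zero_iff.mp h3'
      ext <;> simp [h', h2, h3]
    exact absurd hS1 (mul_ne_zero ha1 hb1)
end

section
/- Two non-real split quaternions a, b ∈ ℍₛ are consimilar — i.e. there exists x ∈ ℍₛ with I_x ≠ 0 and x a = b x̄ — if and only if ā + b = 0, or (I_a = I_b and I_{ā + b} ≠ 0). -/
open Quaternion

lemma QuaternionAlgebra.mul_re (p q : SplitQuaternion) :
    (p * q).re = p.re * q.re - p.imI * q.imI + p.imJ * q.imJ + p.imK * q.imK := by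
  show p.re * q.re + (-1) * p.imI * q.imI + 1 * p.imJ * q.imJ + 0 * 1 * p.imJ * q.imK
    - (-1) * 1 * p.imK * q.imK = _
  ring

lemma QuaternionAlgebra.mul_imI (p q : SplitQuaternion) :
    (p * q).imI = p.re * q.imI + p.imI * q.re - p.imJ * q.imK + p.imK * q.imJ := by
  show p.re * q.imI + p.imI * q.re + 0 * p.imI * q.imI - 1 * p.imJ * q.imK
    + 1 * p.imK * q.imJ = _
  ring

lemma QuaternionAlgebra.mul_imJ (p q : SplitQuaternion) :
    (p * q).imJ = p.re * q.imJ - p.imI * q.imK + p.imJ * q.re + p.imK * q.imI := by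
  show p.re * q.imJ + (-1) * p.imI * q.imK + p.imJ * q.re + 0 * p.imJ * q.imI
    - (-1) * p.imK * q.imI = _
  ring

lemma QuaternionAlgebra.mul_imK (p q : SplitQuaternion) :
    (p * q).imK = p.re * q.imK + p.imI * q.imJ - p.imJ * q.imI + p.imK * q.re := by
  show p.re * q.imK + p.imI * q.imJ + 0 * p.imI * q.imK - p.imJ * q.imI
    + p.imK * q.re = _
  ring

lemma QuaternionAlgebra.smul_re (r : ℝ) (q : SplitQuaternion) : (r • q).re = r • q.re := rfl
lemma QuaternionAlgebra.smul_imI (r : ℝ) (q : SplitQuaternion) : (r • q).imI = r • q.imI := rfl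
lemma QuaternionAlgebra.smul_imJ (r : ℝ) (q : SplitQuaternion) : (r • q).imJ = r • q.imJ := rfl
lemma QuaternionAlgebra.smul_imK (r : ℝ) (q : SplitQuaternion) : (r • q).imK = r • q.imK := rfl

lemma QuaternionAlgebra.coe_re (r : ℝ) : (r : SplitQuaternion).re = r := rfl
lemma QuaternionAlgebra.coe_imI (r : ℝ) : (r : SplitQuaternion).imI = 0 := rfl
lemma QuaternionAlgebra.coe_imJ (r : ℝ) : (r : SplitQuaternion).imJ = 0 := rfl
lemma QuaternionAlgebra.coe_imK (r : ℝ) : (r : SplitQuaternion).imK = 0 := rfl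

lemma Iq_mul (p q : SplitQuaternion) : Iq (p * q) = Iq p * Iq q := by
  simp only [Iq, QuaternionAlgebra.mul_re, QuaternionAlgebra.mul_imI,
    QuaternionAlgebra.mul_imJ, QuaternionAlgebra.mul_imK]
  ring

lemma Iq_star (q : SplitQuaternion) : Iq (star q) = Iq q := by
  simp only [Iq, QuaternionAlgebra.re_star, QuaternionAlgebra.imI_star,
    QuaternionAlgebra.imJ_star, QuaternionAlgebra.imK_star]
  ring

lemma Iq_smul (r : ℝ) (q : SplitQuaternion) : Iq (r • q) = r ^ 2 * Iq q := by
  simp only [Iq, QuaternionAlgebra.smul_re, QuaternionAlgebra.smul_imI,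
    QuaternionAlgebra.smul_imJ, QuaternionAlgebra.smul_imK, smul_eq_mul]
  ring

lemma star_mul_self' (q : SplitQuaternion) : star q * q = (Iq q : SplitQuaternion) := by
  ext <;>
    simp only [Iq, QuaternionAlgebra.mul_re, QuaternionAlgebra.mul_imI,
      QuaternionAlgebra.mul_imJ, QuaternionAlgebra.mul_imK, QuaternionAlgebra.re_star,
      QuaternionAlgebra.imI_star, QuaternionAlgebra.imJ_star, QuaternionAlgebra.imK_star,
      QuaternionAlgebra.coe_re, QuaternionAlgebra.coe_imI, QuaternionAlgebra.coe_imJ,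
      QuaternionAlgebra.coe_imK] <;>
    ring

lemma mul_star_self' (q : SplitQuaternion) : q * star q = (Iq q : SplitQuaternion) := by
  ext <;>
    simp only [Iq, QuaternionAlgebra.mul_re, QuaternionAlgebra.mul_imI,
      QuaternionAlgebra.mul_imJ, QuaternionAlgebra.mul_imK, QuaternionAlgebra.re_star,
      QuaternionAlgebra.imI_star, QuaternionAlgebra.imJ_star, QuaternionAlgebra.imK_star,
      QuaternionAlgebra.coe_re, QuaternionAlgebra.coe_imI, QuaternionAlgebra.coe_imJ,
      QuaternionAlgebra.coe_imK] <;>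
    ring

/-- Two non-real split quaternions `a, b` are consimilar (`x a = b x̄` for some
invertible `x`, i.e. with `I_x ≠ 0`) if and only if `ā + b = 0`, or `I_a = I_b` and
`I_{ā+b} ≠ 0`. -/
theorem consimilar_iff (a b : SplitQuaternion) (ha : a.im ≠ 0) (hb : b.im ≠ 0) :
    (∃ x : SplitQuaternion, Iq x ≠ 0 ∧ x * a = b * star x) ↔
      (star a + b = 0 ∨ (Iq a = Iq b ∧ Iq (star a + b) ≠ 0)) := by
  constructor
  · rintro ⟨x, hx, hxa⟩
    have hIab : Iq a = Iq b := by
      have h := congrArg Iq hxa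
      rw [Iq_mul, Iq_mul, Iq_star] at h
      exact mul_left_cancel₀ hx (h.trans (mul_comm _ _))
    by_cases hc : Iq (star a + b) = 0
    · left
      set c : SplitQuaternion := star a + b with hc_def
      set r : ℝ := 2 * (x * a).re with hr_def
      have key : c * star x = (r : SplitQuaternion) := by
        have : c * star x = x * a + star (x * a) := by
          rw [star_mul, hc_def, add_mul, hxa]; abel
        rw [this, QuaternionAlgebra.self_add_star', zero_mul, add_zero]
      have key2 : (Iq x) • c = r • x := by
        have := congrArg (· * x) key
        simp only [mul_assoc, star_mul_self'] at this
        rw [QuaternionAlgebra.mul_coe_eq_smul, QuaternionAlgebra.coe_mul_eq_smul] at this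
        exact this
      have h2 := congrArg Iq key2
      rw [Iq_smul, Iq_smul, hc, mul_zero] at h2
      have hr0 : r = 0 := by
        have : r ^ 2 = 0 := by
          rcases mul_eq_zero.mp h2.symm with h | h
          · exact h
          · exact absurd h hx
        exact pow_eq_zero_iff (n := 2) (by norm_num) |>.mp this
      rw [hr0, zero_smul] at key2
      rcases smul_eq_zero.mp key2 with h | h
      · exact absurd h hx
      · exact h
    · exact Or.inr ⟨hIab, hc⟩
  · rintro (h | ⟨hI, hc⟩)
    · have hb' : b = -star a := eq_neg_of_add_eq_zero_right h
      by_cases h0 : a.re = 0 ∧ a.imI = 0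
      · refine ⟨⟨0, 0, a.imK, -a.imJ⟩, ?_, ?_⟩
        · have : a.imJ ≠ 0 ∨ a.imK ≠ 0 := by
            by_contra hcon
            push_neg at hcon
            apply ha
            ext <;> simp [QuaternionAlgebra.im, h0.2, hcon.1, hcon.2]
          simp only [Iq]
          intro hcon
          rcases this with h | h <;>
            nlinarith [sq_nonneg a.imJ, sq_nonneg a.imK, pow_two_pos_of_ne_zero h]
        · rw [hb']
          ext <;> simp [QuaternionAlgebra.mul_re, QuaternionAlgebra.mul_imI,
            QuaternionAlgebra.mul_imJ, QuaternionAlgebra.mul_imK, h0.1, h0.2] <;> ring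
      · refine ⟨⟨a.imI, a.re, 0, 0⟩, ?_, ?_⟩
        · simp only [Iq]
          intro hcon
          rcases not_and_or.mp h0 with h | h <;>
            nlinarith [sq_nonneg a.re, sq_nonneg a.imI, pow_two_pos_of_ne_zero h]
        · rw [hb']
          ext <;> simp [QuaternionAlgebra.mul_re, QuaternionAlgebra.mul_imI,
            QuaternionAlgebra.mul_imJ, QuaternionAlgebra.mul_imK] <;> ring
    · refine ⟨star a + b, hc, ?_⟩
      rw [add_mul, star_add, star_star, mul_add, star_mul_self', mul_star_self', hI]
      abel
end
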